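/- arXiv:2311.14221 — 4 statements merged into one kernel-verified Lean document; each statement's English description precedes it below -/
import Mathlib

section
/- Let C be a monoidal category, B a right C-module category that is monoidal with compatibility isomorphisms l_{B,X} : B ◁ X → B ⊗ (1 ◁ X) satisfying the pentagon-type coherence. Then for every object A of B, the functor L_A : B → B, L_A(B) = A ⊗ B, is a C-module functor with structure maps η_{B,V} = l_{A⊗B,V}^{-1} ∘ (id_A ⊗ l_{B,V}) : A ⊗ (B ◁ V) → (A ⊗ B) ◁ V; in particular η satisfies the module-functor coherence η_{B,V⊗W} followed by associativity equals (η_{B,V} ◁ id_W) ∘ η_{B◁V,W}. -/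
open CategoryTheory MonoidalCategory

namespace Stmt12

/-- A right module category structure of a monoidal category `C` on a category `B`. -/
structure RightModCat (C B : Type*) [Category C] [Category B] [MonoidalCategory C] where
  act : B → C → B
  actMap : ∀ {b b' : B} {x x' : C}, (b ⟶ b') → (x ⟶ x') → (act b x ⟶ act b' x')
  actMap_id : ∀ (b : B) (x : C), actMap (𝟙 b) (𝟙 x) = 𝟙 (act b x)
  actMap_comp : ∀ {b₁ b₂ b₃ : B} {x₁ x₂ x₃ : C} (f : b₁ ⟶ b₂) (f' : b₂ ⟶ b₃)
    (g : x₁ ⟶ x₂) (g' : x₂ ⟶ x₃),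
    actMap (f ≫ f') (g ≫ g') = actMap f g ≫ actMap f' g'
  massoc : ∀ (b : B) (x y : C), act b (x ⊗ y) ≅ act (act b x) y
  massoc_natural : ∀ {b b' : B} {x x' y y' : C} (f : b ⟶ b') (g : x ⟶ x') (h : y ⟶ y'),
    actMap f (g ⊗ₘ h) ≫ (massoc b' x' y').hom = (massoc b x y).hom ≫ actMap (actMap f g) h
  runit : ∀ b : B, act b (𝟙_ C) ≅ b
  runit_natural : ∀ {b b' : B} (f : b ⟶ b'),
    actMap f (𝟙 (𝟙_ C)) ≫ (runit b').hom = (runit b).hom ≫ f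
  pentagon : ∀ (b : B) (x y z : C),
    actMap (𝟙 b) (α_ x y z).hom ≫ (massoc b x (y ⊗ z)).hom ≫ (massoc (act b x) y z).hom =
      (massoc b (x ⊗ y) z).hom ≫ actMap (massoc b x y).hom (𝟙 z)
  unit_act : ∀ (b : B) (x : C),
    (massoc b (𝟙_ C) x).hom ≫ actMap (runit b).hom (𝟙 x) = actMap (𝟙 b) (λ_ x).hom

/-- A *monoidal* right `C`-module category: a monoidal category `B` with a right
`C`-module structure together with compatibility isomorphisms
`l_{b,x} : b ◁ x ≅ b ⊗ (𝟙_B ◁ x)` satisfying the coherence axioms. -/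
structure MonModCat (C B : Type*) [Category C] [Category B] [MonoidalCategory C]
    [MonoidalCategory B] extends RightModCat C B where
  l : ∀ (b : B) (x : C), act b x ≅ b ⊗ act (𝟙_ B) x
  l_natural : ∀ {b b' : B} {x x' : C} (f : b ⟶ b') (g : x ⟶ x'),
    actMap f g ≫ (l b' x').hom = (l b x).hom ≫ (f ⊗ₘ actMap (𝟙 (𝟙_ B)) g)
  l_unit_right : ∀ b : B,
    (l b (𝟙_ C)).hom = (runit b).hom ≫ (ρ_ b).inv ≫ (𝟙 b ⊗ₘ (runit (𝟙_ B)).inv)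
  l_unit_left : ∀ x : C, (l (𝟙_ B) x).hom = (λ_ (act (𝟙_ B) x)).inv
  l_coherence : ∀ (b : B) (x y : C),
    (l (act b x) y).hom ≫ ((l b x).hom ⊗ₘ 𝟙 (act (𝟙_ B) y)) ≫
        (α_ b (act (𝟙_ B) x) (act (𝟙_ B) y)).hom =
      (massoc b x y).inv ≫ (l b (x ⊗ y)).hom ≫ (𝟙 b ⊗ₘ (massoc (𝟙_ B) x y).hom) ≫
        (𝟙 b ⊗ₘ (l (act (𝟙_ B) x) y).hom)

variable {C B : Type*} [Category C] [Category B] [MonoidalCategory C] [MonoidalCategory B]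

/-- The module-functor structure map
`η_{b,v} = l⁻¹_{A⊗b,v} ∘ (id_A ⊗ l_{b,v}) : A ⊗ (b ◁ v) ⟶ (A ⊗ b) ◁ v`
of the functor `L_A = A ⊗ -`. -/
def ηLA (M : MonModCat C B) (A b : B) (v : C) : A ⊗ M.act b v ⟶ M.act (A ⊗ b) v :=
  (𝟙 A ⊗ₘ (M.l b v).hom) ≫ (α_ A b (M.act (𝟙_ B) v)).inv ≫ (M.l (A ⊗ b) v).inv

set_option maxHeartbeats 1000000 in
/-- For a monoidal right `C`-module category `B` and `A ∈ B`, the functor `L_A = A ⊗ -`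
with structure maps `η` is a `C`-module functor: `η` satisfies the module-functor
coherence axiom. -/
theorem LA_module_functor (M : MonModCat C B) (A : B) (b : B) (v w : C) :
    (𝟙 A ⊗ₘ (M.massoc b v w).hom) ≫ ηLA M A (M.act b v) w ≫ M.actMap (ηLA M A b v) (𝟙 w) =
      ηLA M A b (v ⊗ w) ≫ (M.massoc (A ⊗ b) v w).hom := by
  -- Express `actMap (ηLA) (𝟙 w)` via naturality of `l`.
  have hη : M.actMap (ηLA M A b v) (𝟙 w) =
      (M.l (A ⊗ M.act b v) w).hom ≫ (ηLA M A b v ⊗ₘ 𝟙 (M.act (𝟙_ B) w)) ≫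
        (M.l (M.act (A ⊗ b) v) w).inv := by
    have h := M.l_natural (ηLA M A b v) (𝟙 w)
    rw [M.actMap_id] at h
    rw [← Category.assoc, ← h]; simp
  -- Rearranged coherence for `A ⊗ b`.
  have hC : (M.l (A ⊗ b) (v ⊗ w)).inv ≫ (M.massoc (A ⊗ b) v w).hom =
      (𝟙 (A ⊗ b) ⊗ₘ (M.massoc (𝟙_ B) v w).hom) ≫
        (𝟙 (A ⊗ b) ⊗ₘ (M.l (M.act (𝟙_ B) v) w).hom) ≫
        (α_ (A ⊗ b) (M.act (𝟙_ B) v) (M.act (𝟙_ B) w)).inv ≫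
        ((M.l (A ⊗ b) v).inv ⊗ₘ 𝟙 (M.act (𝟙_ B) w)) ≫
        (M.l (M.act (A ⊗ b) v) w).inv := by
    have h := M.l_coherence (A ⊗ b) v w
    rw [Iso.eq_inv_comp] at h
    -- h : massoc.hom ≫ l(act,w).hom ≫ (l⊗1) ≫ α = l(v⊗w).hom ≫ (1⊗m₁) ≫ (1⊗lE)
    rw [Iso.inv_comp_eq]
    calc (M.massoc (A ⊗ b) v w).hom
        = ((M.massoc (A ⊗ b) v w).hom ≫ (M.l (M.act (A ⊗ b) v) w).hom ≫
            ((M.l (A ⊗ b) v).hom ⊗ₘ 𝟙 (M.act (𝟙_ B) w)) ≫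
            (α_ (A ⊗ b) (M.act (𝟙_ B) v) (M.act (𝟙_ B) w)).hom) ≫
            (α_ (A ⊗ b) (M.act (𝟙_ B) v) (M.act (𝟙_ B) w)).inv ≫
            ((M.l (A ⊗ b) v).inv ⊗ₘ 𝟙 (M.act (𝟙_ B) w)) ≫
            (M.l (M.act (A ⊗ b) v) w).inv := by
          simp [tensorHom_comp_tensorHom]
      _ = _ := by rw [h]; simp
  -- Rearranged coherence for `b`.
  have hC2 : (M.massoc b v w).hom ≫ (M.l (M.act b v) w).hom ≫
      ((M.l b v).hom ⊗ₘ 𝟙 (M.act (𝟙_ B) w)) ≫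
      (α_ b (M.act (𝟙_ B) v) (M.act (𝟙_ B) w)).hom =
      (M.l b (v ⊗ w)).hom ≫ (𝟙 b ⊗ₘ (M.massoc (𝟙_ B) v w).hom) ≫
        (𝟙 b ⊗ₘ (M.l (M.act (𝟙_ B) v) w).hom) := by
    have h := M.l_coherence b v w
    rw [Iso.eq_inv_comp] at h
    simpa using h
  -- The key purely "upstairs" computation.
  have key : (𝟙 A ⊗ₘ (M.massoc b v w).hom) ≫ (𝟙 A ⊗ₘ (M.l (M.act b v) w).hom) ≫
      (α_ A (M.act b v) (M.act (𝟙_ B) w)).inv ≫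
      ((𝟙 A ⊗ₘ (M.l b v).hom) ⊗ₘ 𝟙 (M.act (𝟙_ B) w)) ≫
      ((α_ A b (M.act (𝟙_ B) v)).inv ⊗ₘ 𝟙 (M.act (𝟙_ B) w)) =
      (𝟙 A ⊗ₘ (M.l b (v ⊗ w)).hom) ≫ (α_ A b (M.act (𝟙_ B) (v ⊗ w))).inv ≫
        (𝟙 (A ⊗ b) ⊗ₘ (M.massoc (𝟙_ B) v w).hom) ≫
        (𝟙 (A ⊗ b) ⊗ₘ (M.l (M.act (𝟙_ B) v) w).hom) ≫
        (α_ (A ⊗ b) (M.act (𝟙_ B) v) (M.act (𝟙_ B) w)).inv := by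
    calc _ = (𝟙 A ⊗ₘ (M.massoc b v w).hom) ≫ (𝟙 A ⊗ₘ (M.l (M.act b v) w).hom) ≫
          (𝟙 A ⊗ₘ ((M.l b v).hom ⊗ₘ 𝟙 (M.act (𝟙_ B) w))) ≫
          (α_ A (b ⊗ M.act (𝟙_ B) v) (M.act (𝟙_ B) w)).inv ≫
          ((α_ A b (M.act (𝟙_ B) v)).inv ⊗ₘ 𝟙 (M.act (𝟙_ B) w)) := by
          rw [associator_inv_naturality_assoc (𝟙 A) (M.l b v).hom (𝟙 (M.act (𝟙_ B) w))]
      _ = (𝟙 A ⊗ₘ (M.massoc b v w).hom) ≫ (𝟙 A ⊗ₘ (M.l (M.act b v) w).hom) ≫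
          (𝟙 A ⊗ₘ ((M.l b v).hom ⊗ₘ 𝟙 (M.act (𝟙_ B) w))) ≫
          (𝟙 A ⊗ₘ (α_ b (M.act (𝟙_ B) v) (M.act (𝟙_ B) w)).hom) ≫
          (α_ A b (M.act (𝟙_ B) v ⊗ M.act (𝟙_ B) w)).inv ≫
          (α_ (A ⊗ b) (M.act (𝟙_ B) v) (M.act (𝟙_ B) w)).inv := by
          congr 3
          coherence
      _ = (𝟙 A ⊗ₘ ((M.massoc b v w).hom ≫ (M.l (M.act b v) w).hom ≫
            ((M.l b v).hom ⊗ₘ 𝟙 (M.act (𝟙_ B) w)) ≫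
            (α_ b (M.act (𝟙_ B) v) (M.act (𝟙_ B) w)).hom)) ≫
          (α_ A b (M.act (𝟙_ B) v ⊗ M.act (𝟙_ B) w)).inv ≫
          (α_ (A ⊗ b) (M.act (𝟙_ B) v) (M.act (𝟙_ B) w)).inv := by
          simp [id_tensor_comp]
      _ = (𝟙 A ⊗ₘ (M.l b (v ⊗ w)).hom) ≫
          (𝟙 A ⊗ₘ (𝟙 b ⊗ₘ ((M.massoc (𝟙_ B) v w).hom ≫ (M.l (M.act (𝟙_ B) v) w).hom))) ≫
          (α_ A b (M.act (𝟙_ B) v ⊗ M.act (𝟙_ B) w)).inv ≫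
          (α_ (A ⊗ b) (M.act (𝟙_ B) v) (M.act (𝟙_ B) w)).inv := by
          rw [hC2]; simp [id_tensor_comp]
      _ = _ := by
          rw [associator_inv_naturality_assoc (𝟙 A) (𝟙 b)
            ((M.massoc (𝟙_ B) v w).hom ≫ (M.l (M.act (𝟙_ B) v) w).hom)]
          simp [id_tensorHom_id, id_tensor_comp]
  rw [hη]
  simp only [ηLA, comp_tensor_id, Category.assoc, Iso.inv_hom_id_assoc]
  rw [hC]
  have := congrArg (fun t => t ≫ ((M.l (A ⊗ b) v).inv ⊗ₘ 𝟙 (M.act (𝟙_ B) w)) ≫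
    (M.l (M.act (A ⊗ b) v) w).inv) key
  simpa [Category.assoc] using this

end Stmt12
end

section
/- Let C, B be monoidal categories and suppose B carries a right C-module structure making it a monoidal right C-module category (with compatibility isomorphisms l). Then G : C → B, G(V) = 1_B ◁ V, equipped with the isomorphisms l^{-1}_{1◁V, W} : G(V) ⊗ G(W) → G(V ⊗ W), is a monoidal functor; i.e., these isomorphisms satisfy the monoidal functor coherence ξ_{A,B⊗C} ∘ (id ⊗ ξ_{B,C}) = ξ_{A⊗B,C} ∘ (ξ_{A,B} ⊗ id). -/
open CategoryTheory MonoidalCategory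

namespace Stmt14

/-- A right module category structure of a monoidal category `C` on a category `B`. -/
structure RightModCat (C B : Type*) [Category C] [Category B] [MonoidalCategory C] where
  act : B → C → B
  actMap : ∀ {b b' : B} {x x' : C}, (b ⟶ b') → (x ⟶ x') → (act b x ⟶ act b' x')
  actMap_id : ∀ (b : B) (x : C), actMap (𝟙 b) (𝟙 x) = 𝟙 (act b x)
  actMap_comp : ∀ {b₁ b₂ b₃ : B} {x₁ x₂ x₃ : C} (f : b₁ ⟶ b₂) (f' : b₂ ⟶ b₃)
    (g : x₁ ⟶ x₂) (g' : x₂ ⟶ x₃),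
    actMap (f ≫ f') (g ≫ g') = actMap f g ≫ actMap f' g'
  massoc : ∀ (b : B) (x y : C), act b (x ⊗ y) ≅ act (act b x) y
  massoc_natural : ∀ {b b' : B} {x x' y y' : C} (f : b ⟶ b') (g : x ⟶ x') (h : y ⟶ y'),
    actMap f (g ⊗ₘ h) ≫ (massoc b' x' y').hom = (massoc b x y).hom ≫ actMap (actMap f g) h
  runit : ∀ b : B, act b (𝟙_ C) ≅ b
  runit_natural : ∀ {b b' : B} (f : b ⟶ b'),
    actMap f (𝟙 (𝟙_ C)) ≫ (runit b').hom = (runit b).hom ≫ f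
  pentagon : ∀ (b : B) (x y z : C),
    actMap (𝟙 b) (α_ x y z).hom ≫ (massoc b x (y ⊗ z)).hom ≫ (massoc (act b x) y z).hom =
      (massoc b (x ⊗ y) z).hom ≫ actMap (massoc b x y).hom (𝟙 z)
  unit_act : ∀ (b : B) (x : C),
    (massoc b (𝟙_ C) x).hom ≫ actMap (runit b).hom (𝟙 x) = actMap (𝟙 b) (λ_ x).hom

/-- A *monoidal* right `C`-module category: a monoidal category `B` with a right
`C`-module structure together with compatibility isomorphisms
`l_{b,x} : b ◁ x ≅ b ⊗ (𝟙_B ◁ x)` satisfying the coherence axioms. -/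
structure MonModCat (C B : Type*) [Category C] [Category B] [MonoidalCategory C]
    [MonoidalCategory B] extends RightModCat C B where
  l : ∀ (b : B) (x : C), act b x ≅ b ⊗ act (𝟙_ B) x
  l_natural : ∀ {b b' : B} {x x' : C} (f : b ⟶ b') (g : x ⟶ x'),
    actMap f g ≫ (l b' x').hom = (l b x).hom ≫ (f ⊗ₘ actMap (𝟙 (𝟙_ B)) g)
  l_unit_right : ∀ b : B,
    (l b (𝟙_ C)).hom = (runit b).hom ≫ (ρ_ b).inv ≫ (𝟙 b ⊗ₘ (runit (𝟙_ B)).inv)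
  l_unit_left : ∀ x : C, (l (𝟙_ B) x).hom = (λ_ (act (𝟙_ B) x)).inv
  l_coherence : ∀ (b : B) (x y : C),
    (l (act b x) y).hom ≫ ((l b x).hom ⊗ₘ 𝟙 (act (𝟙_ B) y)) ≫
        (α_ b (act (𝟙_ B) x) (act (𝟙_ B) y)).hom =
      (massoc b x y).inv ≫ (l b (x ⊗ y)).hom ≫ (𝟙 b ⊗ₘ (massoc (𝟙_ B) x y).hom) ≫
        (𝟙 b ⊗ₘ (l (act (𝟙_ B) x) y).hom)

variable {C B : Type*} [Category C] [Category B] [MonoidalCategory C] [MonoidalCategory B]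

/-- The monoidal structure map `l⁻¹_{𝟙◁V,W} : G(V) ⊗ G(W) ⟶ G(V ⊗ W)` of the functor
`G(V) = 𝟙_B ◁ V` (composed with the module associator in the non-strict setting). -/
def Gμ (M : MonModCat C B) (V W : C) :
    M.act (𝟙_ B) V ⊗ M.act (𝟙_ B) W ⟶ M.act (𝟙_ B) (V ⊗ W) :=
  (M.l (M.act (𝟙_ B) V) W).inv ≫ (M.massoc (𝟙_ B) V W).inv

/-- For a monoidal right `C`-module category `B`, the functor `G : C ⥤ B`,
`G(V) = 𝟙_B ◁ V`, equipped with the isomorphisms `l⁻¹_{𝟙◁V,W}`, is a monoidal functor: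
the structure maps satisfy the monoidal functor coherence axiom. -/
theorem G_monoidal (M : MonModCat C B) (V W U : C) :
    (Gμ M V W ⊗ₘ 𝟙 (M.act (𝟙_ B) U)) ≫ Gμ M (V ⊗ W) U ≫
        M.actMap (𝟙 (𝟙_ B)) (α_ V W U).hom =
      (α_ (M.act (𝟙_ B) V) (M.act (𝟙_ B) W) (M.act (𝟙_ B) U)).hom ≫
        (𝟙 (M.act (𝟙_ B) V) ⊗ₘ Gμ M W U) ≫ Gμ M V (W ⊗ U) := by
  have pent : (M.massoc (𝟙_ B) (V ⊗ W) U).inv ≫ M.actMap (𝟙 (𝟙_ B)) (α_ V W U).hom =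
      M.actMap (M.massoc (𝟙_ B) V W).hom (𝟙 U) ≫
        (M.massoc (M.act (𝟙_ B) V) W U).inv ≫ (M.massoc (𝟙_ B) V (W ⊗ U)).inv := by
    rw [Iso.inv_comp_eq]
    simp only [← Category.assoc]
    rw [Iso.eq_comp_inv, Iso.eq_comp_inv]
    simp only [Category.assoc]
    exact M.pentagon (𝟙_ B) V W U
  have lnat : (M.l (M.act (𝟙_ B) (V ⊗ W)) U).inv ≫ M.actMap (M.massoc (𝟙_ B) V W).hom (𝟙 U) =
      ((M.massoc (𝟙_ B) V W).hom ⊗ₘ 𝟙 (M.act (𝟙_ B) U)) ≫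
        (M.l (M.act (M.act (𝟙_ B) V) W) U).inv := by
    rw [Iso.inv_comp_eq]
    simp only [← Category.assoc]
    rw [Iso.eq_comp_inv]
    rw [M.l_natural, M.actMap_id]
  have coh := M.l_coherence (M.act (𝟙_ B) V) W U
  simp only [Gμ, Category.assoc]
  rw [pent]
  rw [show ((M.l (M.act (𝟙_ B) V) W).inv ≫ (M.massoc (𝟙_ B) V W).inv ⊗ₘ 𝟙 (M.act (𝟙_ B) U)) ≫
      (M.l (M.act (𝟙_ B) (V ⊗ W)) U).inv ≫ M.actMap (M.massoc (𝟙_ B) V W).hom (𝟙 U) ≫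
      (M.massoc (M.act (𝟙_ B) V) W U).inv ≫ (M.massoc (𝟙_ B) V (W ⊗ U)).inv =
      ((M.l (M.act (𝟙_ B) V) W).inv ≫ (M.massoc (𝟙_ B) V W).inv ⊗ₘ 𝟙 (M.act (𝟙_ B) U)) ≫
      ((M.l (M.act (𝟙_ B) (V ⊗ W)) U).inv ≫ M.actMap (M.massoc (𝟙_ B) V W).hom (𝟙 U)) ≫
      (M.massoc (M.act (𝟙_ B) V) W U).inv ≫ (M.massoc (𝟙_ B) V (W ⊗ U)).inv by
    simp [Category.assoc]]
  rw [lnat]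
  rw [← cancel_epi ((M.l (M.act (𝟙_ B) V) W).hom ⊗ₘ 𝟙 (M.act (𝟙_ B) U)),
    ← cancel_epi (M.l (M.act (M.act (𝟙_ B) V) W) U).hom]
  slice_rhs 1 3 => rw [coh]
  simp [MonoidalCategory.tensorHom_comp_tensorHom]

end Stmt14
end

section
/- Let C, B be monoidal categories, (F, ξ, c) : B → C a monoidal C-module functor on a monoidal right C-module category B satisfying the compatibility l_{F(B),V} ∘ c_{B,V} = (id_{F(B)} ⊗ c_{1,V}) ∘ ξ^{-1}_{B, 1◁V} ∘ F(l_{B,V}). Then the natural isomorphisms α_V := c_{1,V} : F(1_B ◁ V) → V form a monoidal natural isomorphism F ∘ G ≅ Id_C, where G(V) = 1_B ◁ V with monoidal structure l^{-1}_{1◁V,W}; i.e., c_{1,V} ⊗ c_{1,W} = c_{1, V⊗W} ∘ F(l^{-1}_{1◁V,W}) ∘ ξ_{1◁V, 1◁W}. -/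
open CategoryTheory MonoidalCategory

namespace Stmt15

/-- A right module category structure of a monoidal category `C` on a category `B`. -/
structure RightModCat (C B : Type*) [Category C] [Category B] [MonoidalCategory C] where
  act : B → C → B
  actMap : ∀ {b b' : B} {x x' : C}, (b ⟶ b') → (x ⟶ x') → (act b x ⟶ act b' x')
  actMap_id : ∀ (b : B) (x : C), actMap (𝟙 b) (𝟙 x) = 𝟙 (act b x)
  actMap_comp : ∀ {b₁ b₂ b₃ : B} {x₁ x₂ x₃ : C} (f : b₁ ⟶ b₂) (f' : b₂ ⟶ b₃)
    (g : x₁ ⟶ x₂) (g' : x₂ ⟶ x₃),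
    actMap (f ≫ f') (g ≫ g') = actMap f g ≫ actMap f' g'
  massoc : ∀ (b : B) (x y : C), act b (x ⊗ y) ≅ act (act b x) y
  massoc_natural : ∀ {b b' : B} {x x' y y' : C} (f : b ⟶ b') (g : x ⟶ x') (h : y ⟶ y'),
    actMap f (g ⊗ₘ h) ≫ (massoc b' x' y').hom = (massoc b x y).hom ≫ actMap (actMap f g) h
  runit : ∀ b : B, act b (𝟙_ C) ≅ b
  runit_natural : ∀ {b b' : B} (f : b ⟶ b'),
    actMap f (𝟙 (𝟙_ C)) ≫ (runit b').hom = (runit b).hom ≫ f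
  pentagon : ∀ (b : B) (x y z : C),
    actMap (𝟙 b) (α_ x y z).hom ≫ (massoc b x (y ⊗ z)).hom ≫ (massoc (act b x) y z).hom =
      (massoc b (x ⊗ y) z).hom ≫ actMap (massoc b x y).hom (𝟙 z)
  unit_act : ∀ (b : B) (x : C),
    (massoc b (𝟙_ C) x).hom ≫ actMap (runit b).hom (𝟙 x) = actMap (𝟙 b) (λ_ x).hom

/-- A *monoidal* right `C`-module category: a monoidal category `B` with a right
`C`-module structure together with compatibility isomorphisms
`l_{b,x} : b ◁ x ≅ b ⊗ (𝟙_B ◁ x)` satisfying the coherence axioms. -/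
structure MonModCat (C B : Type*) [Category C] [Category B] [MonoidalCategory C]
    [MonoidalCategory B] extends RightModCat C B where
  l : ∀ (b : B) (x : C), act b x ≅ b ⊗ act (𝟙_ B) x
  l_natural : ∀ {b b' : B} {x x' : C} (f : b ⟶ b') (g : x ⟶ x'),
    actMap f g ≫ (l b' x').hom = (l b x).hom ≫ (f ⊗ₘ actMap (𝟙 (𝟙_ B)) g)
  l_unit_right : ∀ b : B,
    (l b (𝟙_ C)).hom = (runit b).hom ≫ (ρ_ b).inv ≫ (𝟙 b ⊗ₘ (runit (𝟙_ B)).inv)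
  l_unit_left : ∀ x : C, (l (𝟙_ B) x).hom = (λ_ (act (𝟙_ B) x)).inv
  l_coherence : ∀ (b : B) (x y : C),
    (l (act b x) y).hom ≫ ((l b x).hom ⊗ₘ 𝟙 (act (𝟙_ B) y)) ≫
        (α_ b (act (𝟙_ B) x) (act (𝟙_ B) y)).hom =
      (massoc b x y).inv ≫ (l b (x ⊗ y)).hom ≫ (𝟙 b ⊗ₘ (massoc (𝟙_ B) x y).hom) ≫
        (𝟙 b ⊗ₘ (l (act (𝟙_ B) x) y).hom)

variable {C B : Type*} [Category C] [Category B] [MonoidalCategory C] [MonoidalCategory B]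

/-- The monoidal structure map of the section `G(V) = 𝟙_B ◁ V`. -/
def Gμ (M : MonModCat C B) (V W : C) :
    M.act (𝟙_ B) V ⊗ M.act (𝟙_ B) W ⟶ M.act (𝟙_ B) (V ⊗ W) :=
  (M.l (M.act (𝟙_ B) V) W).inv ≫ (M.massoc (𝟙_ B) V W).inv

private lemma aux_pure {C : Type*} [Category C] [MonoidalCategory C] {a X Y V W : C}
    (cV : X ⟶ a ⊗ V) (cW : Y ⟶ a ⊗ W) (e : a ⟶ 𝟙_ C) :
    (𝟙 X ⊗ₘ cW) ≫ (𝟙 X ⊗ₘ ((e ⊗ₘ 𝟙 W) ≫ (λ_ W).hom)) ≫ (cV ⊗ₘ 𝟙 W) ≫ (α_ a V W).hom ≫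
      (e ⊗ₘ 𝟙 (V ⊗ W)) ≫ (λ_ (V ⊗ W)).hom =
    (cV ≫ (e ⊗ₘ 𝟙 V) ≫ (λ_ V).hom) ⊗ₘ (cW ≫ (e ⊗ₘ 𝟙 W) ≫ (λ_ W).hom) := by
  have hK : (α_ a V W).hom ≫ (e ⊗ₘ 𝟙 (V ⊗ W)) ≫ (λ_ (V ⊗ W)).hom =
      ((e ⊗ₘ 𝟙 V) ≫ (λ_ V).hom) ⊗ₘ 𝟙 W := by
    have h : e ⊗ₘ 𝟙 (V ⊗ W) = e ⊗ₘ (𝟙 V ⊗ₘ 𝟙 W) := by simp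
    rw [h, ← associator_naturality_assoc e (𝟙 V) (𝟙 W)]
    simp [MonoidalCategory.tensorHom_def]
  rw [hK, tensorHom_comp_tensorHom, tensorHom_comp_tensorHom, tensorHom_comp_tensorHom]
  simp

/-- For a monoidal `C`-module functor `(F, ξ, c) : B ⥤ C` on a monoidal right `C`-module
category `B` satisfying the compatibility between `ξ`, `c` and `l`, the isomorphisms
`α_V := c_{𝟙,V}` (normalized by the unit constraint `εF`) form a *monoidal* natural
isomorphism `F ∘ G ≅ Id_C`, where `G(V) = 𝟙_B ◁ V` carries the monoidal structure
`l⁻¹_{𝟙◁V,W}`. -/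
theorem section_monoidal_nat_iso (M : MonModCat C B) (F : B ⥤ C)
    (ξ : ∀ A A' : B, F.obj A ⊗ F.obj A' ≅ F.obj (A ⊗ A'))
    (εF : 𝟙_ C ≅ F.obj (𝟙_ B))
    (hξ_natural : ∀ {A A' D D' : B} (f : A ⟶ D) (g : A' ⟶ D'),
      (F.map f ⊗ₘ F.map g) ≫ (ξ D D').hom = (ξ A A').hom ≫ F.map (f ⊗ₘ g))
    (hξ_assoc : ∀ A A' A'' : B,
      ((ξ A A').hom ⊗ₘ 𝟙 (F.obj A'')) ≫ (ξ (A ⊗ A') A'').hom ≫ F.map (α_ A A' A'').hom =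
        (α_ (F.obj A) (F.obj A') (F.obj A'')).hom ≫ (𝟙 (F.obj A) ⊗ₘ (ξ A' A'').hom) ≫
          (ξ A (A' ⊗ A'')).hom)
    (hξ_unit_left : ∀ A : B,
      (λ_ (F.obj A)).hom = (εF.hom ⊗ₘ 𝟙 (F.obj A)) ≫ (ξ (𝟙_ B) A).hom ≫ F.map (λ_ A).hom)
    (hξ_unit_right : ∀ A : B,
      (ρ_ (F.obj A)).hom = (𝟙 (F.obj A) ⊗ₘ εF.hom) ≫ (ξ A (𝟙_ B)).hom ≫ F.map (ρ_ A).hom)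
    (c : ∀ (b : B) (v : C), F.obj (M.act b v) ≅ F.obj b ⊗ v)
    (hc_natural : ∀ {b b' : B} {v v' : C} (f : b ⟶ b') (g : v ⟶ v'),
      F.map (M.actMap f g) ≫ (c b' v').hom = (c b v).hom ≫ (F.map f ⊗ₘ g))
    (hc_coherence : ∀ (b : B) (v w : C),
      F.map (M.massoc b v w).hom ≫ (c (M.act b v) w).hom ≫ ((c b v).hom ⊗ₘ 𝟙 w) =
        (c b (v ⊗ w)).hom ≫ (α_ (F.obj b) v w).inv)
    (hc_unit : ∀ b : B, F.map (M.runit b).hom = (c b (𝟙_ C)).hom ≫ (ρ_ (F.obj b)).hom)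
    (hcompat : ∀ (b : B) (v : C),
      (c b v).hom ≫ (𝟙 (F.obj b) ⊗ₘ ((λ_ v).inv ≫ (εF.hom ⊗ₘ 𝟙 v))) =
        F.map (M.l b v).hom ≫ (ξ b (M.act (𝟙_ B) v)).inv ≫ (𝟙 (F.obj b) ⊗ₘ (c (𝟙_ B) v).hom))
    (V W : C) :
    (ξ (M.act (𝟙_ B) V) (M.act (𝟙_ B) W)).hom ≫ F.map (Gμ M V W) ≫
        ((c (𝟙_ B) (V ⊗ W)).hom ≫ (εF.inv ⊗ₘ 𝟙 (V ⊗ W)) ≫ (λ_ (V ⊗ W)).hom) =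
      (((c (𝟙_ B) V).hom ≫ (εF.inv ⊗ₘ 𝟙 V) ≫ (λ_ V).hom) ⊗ₘ
        ((c (𝟙_ B) W).hom ≫ (εF.inv ⊗ₘ 𝟙 W) ≫ (λ_ W).hom)) := by
  have hA : (c (M.act (𝟙_ B) V) W).inv ≫ F.map (M.massoc (𝟙_ B) V W).inv =
      ((c (𝟙_ B) V).hom ⊗ₘ 𝟙 W) ≫ (α_ (F.obj (𝟙_ B)) V W).hom ≫
        (c (𝟙_ B) (V ⊗ W)).inv := by
    rw [← cancel_epi (c (M.act (𝟙_ B) V) W).hom, Iso.hom_inv_id_assoc,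
      ← cancel_epi (F.map (M.massoc (𝟙_ B) V W).hom), ← F.map_comp, Iso.hom_inv_id,
      F.map_id, reassoc_of% hc_coherence (𝟙_ B) V W]
    simp
  have hB : (ξ (M.act (𝟙_ B) V) (M.act (𝟙_ B) W)).hom ≫
        F.map (M.l (M.act (𝟙_ B) V) W).inv =
      (𝟙 (F.obj (M.act (𝟙_ B) V)) ⊗ₘ (c (𝟙_ B) W).hom) ≫
        (𝟙 (F.obj (M.act (𝟙_ B) V)) ⊗ₘ ((εF.inv ⊗ₘ 𝟙 W) ≫ (λ_ W).hom)) ≫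
        (c (M.act (𝟙_ B) V) W).inv := by
    rw [← cancel_epi (ξ (M.act (𝟙_ B) V) (M.act (𝟙_ B) W)).inv, Iso.inv_hom_id_assoc,
      ← cancel_epi (F.map (M.l (M.act (𝟙_ B) V) W).hom), ← F.map_comp, Iso.hom_inv_id,
      F.map_id, ← reassoc_of% hcompat (M.act (𝟙_ B) V) W]
    have h2 : ((λ_ W).inv ≫ (εF.hom ⊗ₘ 𝟙 W)) ≫ (εF.inv ⊗ₘ 𝟙 W) ≫ (λ_ W).hom = 𝟙 W := by
      rw [Category.assoc, ← comp_tensor_id_assoc]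
      simp
    rw [← id_tensor_comp_assoc, h2]
    simp
  rw [Gμ, F.map_comp, Category.assoc, reassoc_of% hB, reassoc_of% hA,
    Iso.inv_hom_id_assoc]
  exact aux_pure (c (𝟙_ B) V).hom (c (𝟙_ B) W).hom εF.inv

end Stmt15
end

section
/- Let C be a braided monoidal category with braiding σ and H a bimonoid in C. For left H-comodules (V, ρ_V) and (W, ρ_W), defining the coaction on V ⊗ W by the braided formula, the dinatural maps π_V := (id_H ⊗ ev_V) ∘ (ρ_V ⊗ id_{*V}) : V ⊗ *V → H satisfy: m ∘ (π_V ⊗ π_W ⊗ id_{V⊗W}) ∘ (id_{V ⊗ *V} ⊗ σ_{V, W ⊗ *W} ⊗ id_W) ∘ (id ⊗ coev_V ⊗ id ⊗ coev_W) = ρ_{V⊗W}, where ρ_{V⊗W} = (m ⊗ id) ∘ (id_H ⊗ σ_{V,H} ⊗ id_W) ∘ (ρ_V ⊗ ρ_W). -/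
open CategoryTheory MonoidalCategory

namespace Stmt16

/-- A bialgebra (bimonoid) object in a braided monoidal category. -/
structure Bialg (C : Type*) [Category C] [MonoidalCategory C] [BraidedCategory C] where
  X : C
  mul : X ⊗ X ⟶ X
  one : 𝟙_ C ⟶ X
  comul : X ⟶ X ⊗ X
  counit : X ⟶ 𝟙_ C
  mul_assoc : (mul ⊗ₘ 𝟙 X) ≫ mul = (α_ X X X).hom ≫ (𝟙 X ⊗ₘ mul) ≫ mul
  one_mul : (one ⊗ₘ 𝟙 X) ≫ mul = (λ_ X).hom
  mul_one : (𝟙 X ⊗ₘ one) ≫ mul = (ρ_ X).hom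
  comul_coassoc : comul ≫ (comul ⊗ₘ 𝟙 X) ≫ (α_ X X X).hom = comul ≫ (𝟙 X ⊗ₘ comul)
  counit_comul : comul ≫ (counit ⊗ₘ 𝟙 X) = (λ_ X).inv
  comul_counit : comul ≫ (𝟙 X ⊗ₘ counit) = (ρ_ X).inv
  mul_comul : mul ≫ comul = (comul ⊗ₘ comul) ≫ tensorμ X X X X ≫ (mul ⊗ₘ mul)
  one_comul : one ≫ comul = (λ_ (𝟙_ C)).inv ≫ (one ⊗ₘ one)
  mul_counit : mul ≫ counit = (counit ⊗ₘ counit) ≫ (λ_ (𝟙_ C)).hom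
  one_counit : one ≫ counit = 𝟙 (𝟙_ C)

variable {C : Type*} [Category C] [MonoidalCategory C] [BraidedCategory C]

/-- The dinatural map `π_V := (id_H ⊗ ev_V) ∘ (ρ_V ⊗ id_{ᘁV}) : V ⊗ ᘁV ⟶ H`. -/
def π (H : Bialg C) (V : C) [HasLeftDual V] (ρV : V ⟶ H.X ⊗ V) : V ⊗ (ᘁV : C) ⟶ H.X :=
  (ρV ⊗ₘ 𝟙 (ᘁV : C)) ≫ (α_ H.X V (ᘁV : C)).hom ≫ (𝟙 H.X ⊗ₘ ε_ (ᘁV : C) V) ≫ (ρ_ H.X).hom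

/-- Insertion of `coev_V` on the right of `V`, regrouped as `(V ⊗ ᘁV) ⊗ V`. -/
def ins (V : C) [HasLeftDual V] : V ⟶ (V ⊗ (ᘁV : C)) ⊗ V :=
  (ρ_ V).inv ≫ (𝟙 V ⊗ₘ η_ (ᘁV : C) V) ≫ (α_ V (ᘁV : C) V).inv

set_option maxHeartbeats 1000000 in
/-- For comodules `V, W` over a bialgebra `H` in a braided category,
`m ∘ (π_V ⊗ π_W ⊗ id_{V⊗W}) ∘ (id_{V⊗ᘁV} ⊗ σ_{V,W⊗ᘁW} ⊗ id_W) ∘ (id ⊗ coev_V ⊗ id ⊗ coev_W)`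
equals the braided tensor-product coaction
`ρ_{V⊗W} = (m ⊗ id) ∘ (id_H ⊗ σ_{V,H} ⊗ id_W) ∘ (ρ_V ⊗ ρ_W)`. -/
theorem pi_mul_eq_tensor_coaction (H : Bialg C) (V W : C) [HasLeftDual V] [HasLeftDual W]
    (ρV : V ⟶ H.X ⊗ V) (ρW : W ⟶ H.X ⊗ W)
    (hρV_coassoc : ρV ≫ (H.comul ⊗ₘ 𝟙 V) ≫ (α_ H.X H.X V).hom = ρV ≫ (𝟙 H.X ⊗ₘ ρV))
    (hρV_counit : ρV ≫ (H.counit ⊗ₘ 𝟙 V) = (λ_ V).inv)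
    (hρW_coassoc : ρW ≫ (H.comul ⊗ₘ 𝟙 W) ≫ (α_ H.X H.X W).hom = ρW ≫ (𝟙 H.X ⊗ₘ ρW))
    (hρW_counit : ρW ≫ (H.counit ⊗ₘ 𝟙 W) = (λ_ W).inv) :
    (ins V ⊗ₘ ins W) ≫ tensorμ (V ⊗ (ᘁV : C)) V (W ⊗ (ᘁW : C)) W ≫
        ((π H V ρV ⊗ₘ π H W ρW) ⊗ₘ 𝟙 (V ⊗ W)) ≫ (H.mul ⊗ₘ 𝟙 (V ⊗ W)) =
      (ρV ⊗ₘ ρW) ≫ tensorμ H.X V H.X W ≫ (H.mul ⊗ₘ 𝟙 (V ⊗ W)) := by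
  have hins : ∀ (V : C) [HasLeftDual V] (ρV : V ⟶ H.X ⊗ V),
      ins V ≫ (π H V ρV ⊗ₘ 𝟙 V) = ρV := by
    intro V _ ρV
    simp [π, ins, MonoidalCategory.tensorHom_def, whisker_exchange]
    rw [← associator_inv_naturality_left_assoc, whisker_exchange_assoc,
      ← rightUnitor_inv_naturality_assoc]
    simp
    simp only [← MonoidalCategory.whiskerLeft_comp, Category.assoc,
      ExactPairing.coevaluation_evaluation_assoc]
    simp
  calc (ins V ⊗ₘ ins W) ≫ tensorμ (V ⊗ (ᘁV : C)) V (W ⊗ (ᘁW : C)) W ≫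
          ((π H V ρV ⊗ₘ π H W ρW) ⊗ₘ 𝟙 (V ⊗ W)) ≫ (H.mul ⊗ₘ 𝟙 (V ⊗ W))
      = (ins V ⊗ₘ ins W) ≫ (tensorμ (V ⊗ (ᘁV : C)) V (W ⊗ (ᘁW : C)) W ≫
          ((π H V ρV ⊗ₘ π H W ρW) ⊗ₘ (𝟙 V ⊗ₘ 𝟙 W))) ≫ (H.mul ⊗ₘ 𝟙 (V ⊗ W)) := by
        simp [id_tensorHom_id]
    _ = (ins V ⊗ₘ ins W) ≫ (((π H V ρV ⊗ₘ 𝟙 V) ⊗ₘ (π H W ρW ⊗ₘ 𝟙 W)) ≫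
          tensorμ H.X V H.X W) ≫ (H.mul ⊗ₘ 𝟙 (V ⊗ W)) := by
        rw [tensorμ_natural]
    _ = ((ins V ≫ (π H V ρV ⊗ₘ 𝟙 V)) ⊗ₘ (ins W ≫ (π H W ρW ⊗ₘ 𝟙 W))) ≫
          tensorμ H.X V H.X W ≫ (H.mul ⊗ₘ 𝟙 (V ⊗ W)) := by
        simp only [Category.assoc]; rw [tensorHom_comp_tensorHom_assoc]
    _ = (ρV ⊗ₘ ρW) ≫ tensorμ H.X V H.X W ≫ (H.mul ⊗ₘ 𝟙 (V ⊗ W)) := by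
        rw [hins V ρV, hins W ρW]

end Stmt16
end
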